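/- Let φ be a proper parameterization of a plane curve of degree d with μ-basis degrees μ and d−μ, and suppose the inverse of φ is defined by a pair of coprime homogeneous forms of degree ν. If μ > 1, then μ·ν + 1 ≥ d. In particular, if ν = 2 and μ > 1, then μ = ⌊d/2⌋. -/

import Mathlib

open MvPolynomial

lemma aux_scale {K S : Type*} [CommSemiring K] [CommSemiring S] [Algebra K S] {σ : Type*}
    {p : MvPolynomial σ K} {n : ℕ} (hp : p.IsHomogeneous n) (c : S) (v : σ → S) :
    aeval (fun i => c * v i) p = c ^ n * aeval v p := by
  conv_lhs => rw [p.as_sum]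
  conv_rhs => rw [p.as_sum]
  rw [map_sum, map_sum, Finset.mul_sum]
  refine Finset.sum_congr rfl fun m hm => ?_
  rw [aeval_monomial, aeval_monomial]
  have hdeg : ∑ i ∈ m.support, m i = n := by
    have h := hp (MvPolynomial.mem_support_iff.mp hm)
    rw [← h, Finsupp.weight_apply]
    simp [Finsupp.sum]
  have hprod : (m.prod fun i k => (c * v i) ^ k) = c ^ n * m.prod fun i k => v i ^ k := by
    rw [Finsupp.prod, Finsupp.prod]
    simp_rw [mul_pow]
    rw [Finset.prod_mul_distrib, Finset.prod_pow_eq_pow_sum, hdeg]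
  rw [hprod]
  ring

lemma aux_dvd_le {K : Type*} [CommRing K] {σ : Type*} {a b : MvPolynomial σ K} {m n : ℕ}
    (ha : a.IsHomogeneous m) (hb : b.IsHomogeneous n) (hab : a ∣ b) (hb0 : b ≠ 0) : m ≤ n := by
  by_contra hlt
  push_neg at hlt
  obtain ⟨c, rfl⟩ := hab
  apply hb0
  have h1 : homogeneousComponent n (a * c) = a * c := by
    rw [homogeneousComponent_of_mem ((mem_homogeneousSubmodule _ _).mpr hb), if_pos rfl]
  rw [← h1]
  conv_lhs => rw [← sum_homogeneousComponent c]
  rw [Finset.mul_sum, map_sum]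
  refine Finset.sum_eq_zero fun i _ => ?_
  rw [homogeneousComponent_of_mem
    ((mem_homogeneousSubmodule _ _).mpr (ha.mul (homogeneousComponent_isHomogeneous i c))),
    if_neg (by omega)]

lemma aux_C {K : Type*} [CommSemiring K] {σ : Type*} {F : MvPolynomial σ K}
    (h : F.IsHomogeneous 0) : F = C (coeff 0 F) := by
  classical
  ext m
  rw [coeff_C]
  split_ifs with hm
  · rw [← hm]
  · by_contra hc
    push_neg at hc
    have h2 := h hc
    have : m.degree = 0 := by rw [Finsupp.degree_eq_weight_one]; exact h2
    exact hm ((Finsupp.degree_eq_zero_iff m).mp this).symm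

lemma aux_lin {K : Type*} [CommSemiring K] {σ : Type*} [Fintype σ] [DecidableEq σ]
    {F : MvPolynomial σ K} (h : F.IsHomogeneous 1) :
    F = ∑ k, C (coeff (Finsupp.single k 1) F) * X k := by
  ext m
  rw [coeff_sum]
  simp_rw [coeff_C_mul, coeff_X']
  by_cases hm : ∃ k, m = Finsupp.single k 1
  · obtain ⟨k, rfl⟩ := hm
    rw [Finset.sum_eq_single k]
    · rw [if_pos rfl, mul_one]
    · intro b _ hbk
      rw [if_neg, mul_zero]
      intro he
      exact hbk ((Finsupp.single_left_inj one_ne_zero).mp he)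
    · intro hk; exact absurd (Finset.mem_univ k) hk
  · push_neg at hm
    have hF : coeff m F = 0 := by
      by_contra hc
      have hd1 : m.degree = 1 := by rw [Finsupp.degree_eq_weight_one]; exact h hc
      have hsupp : m.support.Nonempty := by
        rcases Finset.eq_empty_or_nonempty m.support with he | hne
        · exfalso
          have : m = 0 := Finsupp.support_eq_empty.mp he
          rw [this] at hd1
          simp [Finsupp.degree] at hd1
        · exact hne
      obtain ⟨k, hk⟩ := hsupp
      have hk1 : m k = 1 :=
        le_antisymm (hd1 ▸ Finsupp.le_degree k m)
          (Nat.one_le_iff_ne_zero.mpr (Finsupp.mem_support_iff.mp hk))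
      apply hm k
      ext j
      by_cases hj : j = k
      · rw [hj, hk1, Finsupp.single_eq_same]
      · rw [Finsupp.single_eq_of_ne' (Ne.symm hj)]
        by_contra hj0
        have hjs : j ∈ m.support := Finsupp.mem_support_iff.mpr hj0
        have hsub : ({k, j} : Finset σ) ⊆ m.support := by
          intro i hi
          rcases Finset.mem_insert.mp hi with rfl | hi
          · exact hk
          · rw [Finset.mem_singleton.mp hi]; exact hjs
        have hle : m k + m j ≤ m.degree := by
          rw [Finsupp.degree, ← Finset.sum_pair (fun he => hj he.symm)]
          exact Finset.sum_le_sum_of_subset hsub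
        have : 1 ≤ m j := Nat.one_le_iff_ne_zero.mpr hj0
        omega
    rw [hF]
    refine (Finset.sum_eq_zero fun k _ => ?_).symm
    rw [if_neg (fun he => hm k he.symm), mul_zero]

theorem stmt_15 (K : Type*) [Field K] [IsAlgClosed K] (d ν μ : ℕ)
    (u : Fin 3 → MvPolynomial (Fin 2) K)
    (hu : ∀ k, (u k).IsHomogeneous d)
    (hucop : ∀ g : MvPolynomial (Fin 2) K, (∀ k, g ∣ u k) → IsUnit g)
    (F₁ F₂ : MvPolynomial (Fin 3) K)
    (hF₁ : F₁.IsHomogeneous ν) (hF₂ : F₂.IsHomogeneous ν)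
    (hFcop : IsRelPrime F₁ F₂)
    (hrel : X 0 * aeval u F₂ = X 1 * aeval u F₁)
    (hFu : ¬(aeval u F₁ = 0 ∧ aeval u F₂ = 0))
    (hGirr : Irreducible
      (X (Sum.inl 0) * rename Sum.inr F₂ - X (Sum.inl 1) * rename Sum.inr F₁ :
        MvPolynomial (Fin 2 ⊕ Fin 3) K))
    (E : MvPolynomial (Fin 3) K) (hE : Irreducible E) (hEdeg : E.IsHomogeneous d)
    (hEcurve : ∀ Q : MvPolynomial (Fin 3) K, aeval u Q = 0 ↔ E ∣ Q)
    -- `μ` is the minimal degree of a nonzero syzygy of `(u₁,u₂,u₃)`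
    (hsyz : ∃ p : Fin 3 → MvPolynomial (Fin 2) K,
      (∀ k, (p k).IsHomogeneous μ) ∧ p ≠ 0 ∧ ∑ k, p k * u k = 0)
    (hmin : ∀ μ' < μ, ∀ p : Fin 3 → MvPolynomial (Fin 2) K,
      (∀ k, (p k).IsHomogeneous μ') → ∑ k, p k * u k = 0 → p = 0)
    (hμd : 2 * μ ≤ d) (hμ : 1 < μ) :
    d ≤ μ * ν + 1 ∧ (ν = 2 → μ = d / 2) := by
  obtain ⟨p, hp, hpne, hsum⟩ := hsyz
  have hne10 : (Finsupp.single (1 : Fin 2) 1 : Fin 2 →₀ ℕ) ≠ Finsupp.single (0 : Fin 2) 1 := by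
    intro h
    have := DFunLike.congr_fun h 1
    rw [Finsupp.single_eq_same, Finsupp.single_eq_of_ne (by norm_num)] at this
    exact one_ne_zero this
  suffices hmain : d ≤ μ * ν + 1 by
    refine ⟨hmain, fun hν2 => ?_⟩
    subst hν2
    omega
  rcases Nat.lt_or_ge ν 2 with hν | hν
  · exfalso
    interval_cases ν
    · -- ν = 0
      have h1 : F₁ = C (coeff 0 F₁) := aux_C hF₁
      have h2 : F₂ = C (coeff 0 F₂) := aux_C hF₂
      rw [h1, h2] at hrel
      simp only [aeval_C, algebraMap_eq] at hrel
      have hb : coeff 0 F₂ = 0 := by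
        have h3 := congrArg (coeff (Finsupp.single (0 : Fin 2) 1)) hrel
        rw [mul_comm (X 0) (C (coeff 0 F₂)), mul_comm (X 1) (C (coeff 0 F₁)),
          coeff_C_mul, coeff_C_mul, coeff_X', coeff_X', if_pos rfl,
          if_neg hne10, mul_one, mul_zero] at h3
        exact h3
      have ha : coeff 0 F₁ = 0 := by
        have h3 := congrArg (coeff (Finsupp.single (1 : Fin 2) 1)) hrel
        rw [mul_comm (X 0) (C (coeff 0 F₂)), mul_comm (X 1) (C (coeff 0 F₁)),
          coeff_C_mul, coeff_C_mul, coeff_X', coeff_X', if_pos rfl,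
          if_neg (Ne.symm hne10), mul_one, mul_zero] at h3
        exact h3.symm
      exact hFu ⟨by rw [h1, ha]; simp, by rw [h2, hb]; simp⟩
    · -- ν = 1
      have h1 : F₁ = ∑ k, C (coeff (Finsupp.single k 1) F₁) * X k := aux_lin hF₁
      have h2 : F₂ = ∑ k, C (coeff (Finsupp.single k 1) F₂) * X k := aux_lin hF₂
      set a : Fin 3 → K := fun k => coeff (Finsupp.single k 1) F₁ with hadef
      set b : Fin 3 → K := fun k => coeff (Finsupp.single k 1) F₂ with hbdef
      have e1 : aeval u F₁ = ∑ k, C (a k) * u k := by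
        conv_lhs => rw [h1]
        rw [map_sum]
        refine Finset.sum_congr rfl fun k _ => ?_
        rw [map_mul, aeval_X, aeval_C, algebraMap_eq]
      have e2 : aeval u F₂ = ∑ k, C (b k) * u k := by
        conv_lhs => rw [h2]
        rw [map_sum]
        refine Finset.sum_congr rfl fun k _ => ?_
        rw [map_mul, aeval_X, aeval_C, algebraMap_eq]
      set q : Fin 3 → MvPolynomial (Fin 2) K :=
        fun k => C (b k) * X 0 - C (a k) * X 1 with hqdef
      have hqhom : ∀ k, (q k).IsHomogeneous 1 := fun k =>
        ((isHomogeneous_X _ _).C_mul _).sub ((isHomogeneous_X _ _).C_mul _)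
      have hqsum : ∑ k, q k * u k = 0 := by
        have h3 : ∑ k, q k * u k = X 0 * aeval u F₂ - X 1 * aeval u F₁ := by
          rw [e1, e2, Finset.mul_sum, Finset.mul_sum, ← Finset.sum_sub_distrib]
          exact Finset.sum_congr rfl fun k _ => by rw [hqdef]; ring
        rw [h3, hrel, sub_self]
      have hq0 := hmin 1 hμ q hqhom hqsum
      have hab : ∀ k, a k = 0 ∧ b k = 0 := by
        intro k
        have hk := congrFun hq0 k
        rw [hqdef] at hk
        simp only at hk
        constructor
        · have h3 := congrArg (coeff (Finsupp.single (1 : Fin 2) 1)) hk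
          rw [coeff_sub, coeff_C_mul, coeff_C_mul, coeff_X', coeff_X', if_pos rfl,
            if_neg (Ne.symm hne10), mul_one, mul_zero, zero_sub, Pi.zero_apply, coeff_zero,
            neg_eq_zero] at h3
          exact h3
        · have h3 := congrArg (coeff (Finsupp.single (0 : Fin 2) 1)) hk
          rw [coeff_sub, coeff_C_mul, coeff_C_mul, coeff_X', coeff_X', if_pos rfl,
            if_neg hne10, mul_one, mul_zero, sub_zero, Pi.zero_apply, coeff_zero] at h3
          exact h3
      refine hFu ⟨?_, ?_⟩
      · rw [e1]
        refine Finset.sum_eq_zero fun k _ => ?_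
        rw [(hab k).1, map_zero, zero_mul]
      · rw [e2]
        refine Finset.sum_eq_zero fun k _ => ?_
        rw [(hab k).2, map_zero, zero_mul]
  · -- main case : ν ≥ 2
    have hFv : ∀ i : Fin 2, (![F₁, F₂] i).IsHomogeneous ν := by
      intro i
      fin_cases i
      · exact hF₁
      · exact hF₂
    set R : MvPolynomial (Fin 3) K := ∑ k, aeval ![F₁, F₂] (p k) * X k with hRdef
    have hRhom : R.IsHomogeneous (ν * μ + 1) := by
      rw [hRdef]
      exact IsHomogeneous.sum _ _ _ fun k _ => ((hp k).aeval _ hFv).mul (isHomogeneous_X _ _)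
    have hdpos : 0 < d := by omega
    have hRu : aeval u R = 0 := by
      have hRuhom : (aeval u R).IsHomogeneous (d * (ν * μ + 1)) := hRhom.aeval u hu
      apply hRuhom.eq_zero_of_forall_eval_eq_zero
      intro τ
      have hcomp : eval τ (aeval u R) = aeval (fun k => eval τ (u k)) R :=
        comp_aeval_apply (f := u) (aeval τ) R
      rw [hcomp]
      set w : Fin 3 → K := fun k => eval τ (u k) with hwdef
      set α : K := aeval w F₁ with hαdef
      set β : K := aeval w F₂ with hβdef
      have hvec : (fun i => aeval w (![F₁, F₂] i)) = ![α, β] := by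
        funext i
        fin_cases i
        · rfl
        · rfl
      have hRw : aeval w R = ∑ k, aeval ![α, β] (p k) * w k := by
        rw [hRdef, map_sum]
        refine Finset.sum_congr rfl fun k _ => ?_
        rw [map_mul, aeval_X, comp_aeval_apply (f := ![F₁, F₂]) (aeval w) (p k), hvec]
      have hα : eval τ (aeval u F₁) = α := comp_aeval_apply (f := u) (aeval τ) F₁
      have hβ : eval τ (aeval u F₂) = β := comp_aeval_apply (f := u) (aeval τ) F₂
      have hrelτ : τ 0 * β = τ 1 * α := by
        have h4 := congrArg (eval τ) hrel
        rw [map_mul, map_mul, eval_X, eval_X, hα, hβ] at h4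
        exact h4
      have hsumτ : ∑ k, eval τ (p k) * w k = 0 := by
        have h4 := congrArg (eval τ) hsum
        rw [map_sum, map_zero] at h4
        simpa [eval_mul] using h4
      rw [hRw]
      have key : ∀ c : K, ![α, β] = (fun i => c * τ i) →
          ∑ k, aeval ![α, β] (p k) * w k = 0 := by
        intro c hc
        have h5 : ∀ k, aeval ![α, β] (p k) = c ^ μ * eval τ (p k) := by
          intro k
          rw [hc]
          exact aux_scale (hp k) c τ
        calc ∑ k, aeval ![α, β] (p k) * w k
            = ∑ k, c ^ μ * (eval τ (p k) * w k) := by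
              refine Finset.sum_congr rfl fun k _ => ?_
              rw [h5 k, mul_assoc]
          _ = c ^ μ * ∑ k, eval τ (p k) * w k := by rw [Finset.mul_sum]
          _ = 0 := by rw [hsumτ, mul_zero]
      rcases eq_or_ne (τ 0) 0 with h0 | h0
      · rcases eq_or_ne (τ 1) 0 with h1 | h1
        · have hw0 : ∀ k, w k = 0 := by
            intro k
            have hτ : τ = fun _ => (0 : K) * 0 := by
              funext i
              fin_cases i
              · simpa using h0
              · simpa using h1
            show eval τ (u k) = 0
            have : aeval τ (u k) = (0 : K) ^ d * aeval (fun _ => (0 : K)) (u k) := by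
              conv_lhs => rw [hτ]
              exact aux_scale (hu k) 0 (fun _ => 0)
            rw [show eval τ (u k) = aeval τ (u k) from rfl, this, zero_pow hdpos.ne', zero_mul]
          refine Finset.sum_eq_zero fun k _ => ?_
          rw [hw0 k, mul_zero]
        · have hα0 : α = 0 := by
            have h6 : τ 1 * α = 0 := by rw [← hrelτ, h0, zero_mul]
            exact (mul_eq_zero.mp h6).resolve_left h1
          refine key (β / τ 1) ?_
          funext i
          fin_cases i
          · show α = β / τ 1 * τ 0
            rw [h0, mul_zero, hα0]
          · show β = β / τ 1 * τ 1
            rw [div_mul_cancel₀ _ h1]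
      · refine key (α / τ 0) ?_
        funext i
        fin_cases i
        · show α = α / τ 0 * τ 0
          rw [div_mul_cancel₀ _ h0]
        · show β = α / τ 0 * τ 1
          rw [div_mul_eq_mul_div, mul_comm α (τ 1), ← hrelτ, mul_comm (τ 0) β,
            mul_div_assoc, div_self h0, mul_one]
    have hER : E ∣ R := (hEcurve R).mp hRu
    have hRne : R ≠ 0 := by
      intro hR0
      set G : MvPolynomial (Fin 2 ⊕ Fin 3) K :=
        X (Sum.inl 0) * rename Sum.inr F₂ - X (Sum.inl 1) * rename Sum.inr F₁ with hGdef
      set L : MvPolynomial (Fin 2 ⊕ Fin 3) K :=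
        ∑ k, rename Sum.inl (p k) * X (Sum.inr k) with hLdef
      have hGp : Prime G := UniqueFactorizationMonoid.irreducible_iff_prime.mp hGirr
      have hkey : rename Sum.inr F₁ * L ∈ vanishingIdeal K (zeroLocus K (Ideal.span {G})) := by
        rw [mem_vanishingIdeal_iff]
        intro x hx
        have hGx : eval x G = 0 := hx G (Ideal.subset_span rfl)
        show eval x (rename Sum.inr F₁ * L) = 0
        rw [map_mul]
        rcases eq_or_ne (eval x (rename Sum.inr F₁)) 0 with hz | hz
        · rw [hz, zero_mul]
        · have hF1y : eval (x ∘ Sum.inr) F₁ ≠ 0 := by rwa [eval_rename] at hz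
          have hGx' : x (Sum.inl 0) * eval (x ∘ Sum.inr) F₂
              = x (Sum.inl 1) * eval (x ∘ Sum.inr) F₁ := by
            rw [hGdef, map_sub, map_mul, map_mul, eval_X, eval_X, eval_rename, eval_rename]
              at hGx
            exact sub_eq_zero.mp hGx
          set y : Fin 3 → K := x ∘ Sum.inr with hydef
          set α : K := eval y F₁ with hαdef
          set β : K := eval y F₂ with hβdef
          set c : K := x (Sum.inl 0) / α with hcdef
          have hτc : (fun i => x (Sum.inl i)) = fun i => c * (![α, β] i) := by
            funext i
            fin_cases i
            · show x (Sum.inl 0) = c * α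
              rw [hcdef, div_mul_cancel₀ _ hF1y]
            · show x (Sum.inl 1) = c * β
              rw [hcdef, div_mul_eq_mul_div, hGx', mul_div_assoc, div_self hF1y, mul_one]
          have hvec2 : (fun i => aeval y (![F₁, F₂] i)) = ![α, β] := by
            funext i
            fin_cases i
            · rfl
            · rfl
          have hLx : eval x L = c ^ μ * eval y R := by
            rw [hLdef, hRdef, map_sum, map_sum, Finset.mul_sum]
            refine Finset.sum_congr rfl fun k _ => ?_
            rw [map_mul, map_mul, eval_X, eval_X, eval_rename]
            have e4 : eval y (aeval ![F₁, F₂] (p k)) = aeval ![α, β] (p k) := by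
              rw [show eval y (aeval ![F₁, F₂] (p k))
                    = (aeval y) (aeval ![F₁, F₂] (p k)) from rfl,
                comp_aeval_apply (f := ![F₁, F₂]) (aeval y) (p k), hvec2]
            have e3 : eval (x ∘ Sum.inl) (p k) = c ^ μ * aeval ![α, β] (p k) := by
              rw [show eval (x ∘ Sum.inl) (p k) = aeval (fun i => x (Sum.inl i)) (p k) from rfl,
                hτc]
              exact aux_scale (hp k) c ![α, β]
            rw [e4, e3]
            show c ^ μ * aeval ![α, β] (p k) * x (Sum.inr k)
              = c ^ μ * (aeval ![α, β] (p k) * y k)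
            rw [mul_assoc]
            rfl
          rw [hLx, hR0, map_zero, mul_zero, mul_zero]
      rw [vanishingIdeal_zeroLocus_eq_radical] at hkey
      obtain ⟨n, hn⟩ := hkey
      rw [Ideal.mem_span_singleton] at hn
      have hGdvd : G ∣ rename Sum.inr F₁ * L := hGp.dvd_of_dvd_pow hn
      rcases hGp.2.2 _ _ hGdvd with hd1 | hd2
      · -- G divides rename Sum.inr F₁, hence F₁ = 0
        obtain ⟨cc, hcc⟩ := hd1
        have h0 := congrArg (aeval (Sum.elim (fun _ : Fin 2 => (0 : MvPolynomial (Fin 3) K)) X))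
          hcc
        rw [hGdef, map_mul, map_sub, map_mul, map_mul, aeval_X, aeval_X] at h0
        simp only [aeval_rename, Sum.elim_comp_inr, Sum.elim_inl, aeval_X_left_apply, zero_mul,
          sub_self] at h0
        -- h0 : F₁ = 0
        have hF₂F₁ : F₂ ∣ F₁ := by rw [h0]; exact dvd_zero F₂
        have hunit : IsUnit F₂ := hFcop hF₂F₁ dvd_rfl
        have := aux_dvd_le hF₂ (isHomogeneous_one _ _) hunit.dvd one_ne_zero
        omega
      · -- G divides L
        obtain ⟨j, hj0⟩ := Function.ne_iff.mp hpne
        have hj : p j ≠ 0 := by simpa using hj0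
        obtain ⟨t, htj⟩ : ∃ t : Fin 2 → K, eval t (p j) ≠ 0 := by
          by_contra hcon
          push_neg at hcon
          exact hj ((hp j).eq_zero_of_forall_eval_eq_zero hcon)
        set θ := aeval (R := K) (Sum.elim (fun i : Fin 2 => (C (t i) : MvPolynomial (Fin 3) K)) X)
          with hθ
        have hθdvd : θ G ∣ θ L := map_dvd _ hd2
        have hCe : ∀ q : MvPolynomial (Fin 2) K,
            aeval (fun i => (C (t i) : MvPolynomial (Fin 3) K)) q = C (eval t q) := by
          intro q
          induction q using MvPolynomial.induction_on with
          | C a => rw [aeval_C, algebraMap_eq, eval_C]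
          | add q r hq hr => simp only [map_add, hq, hr, C_add]
          | mul_X q i hq => simp only [map_mul, aeval_X, eval_X, hq, C_mul]
        have hθG : θ G = C (t 0) * F₂ - C (t 1) * F₁ := by
          rw [hθ, hGdef, map_sub, map_mul, map_mul, aeval_X, aeval_X, aeval_rename, aeval_rename]
          simp only [Sum.elim_comp_inr, Sum.elim_inl, aeval_X_left_apply]
        have hθL : θ L = ∑ k, C (eval t (p k)) * X k := by
          rw [hθ, hLdef, map_sum]
          refine Finset.sum_congr rfl fun k _ => ?_
          rw [map_mul, aeval_X, aeval_rename, Sum.elim_comp_inl, hCe, Sum.elim_inr]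
        have hθLne : θ L ≠ 0 := by
          rw [hθL]
          intro h00
          have h01 := congrArg (eval (fun k : Fin 3 => if k = j then (1 : K) else 0)) h00
          rw [map_sum, map_zero] at h01
          rw [Finset.sum_eq_single j] at h01
          · rw [map_mul, eval_C, eval_X, if_pos rfl, mul_one] at h01
            exact htj h01
          · intro b _ hbj
            rw [map_mul, eval_C, eval_X, if_neg hbj, mul_zero]
          · intro hjmem
            exact absurd (Finset.mem_univ j) hjmem
        have hθGhom : (θ G).IsHomogeneous ν := by
          rw [hθG]
          exact (hF₂.C_mul _).sub (hF₁.C_mul _)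
        have hθLhom : (θ L).IsHomogeneous 1 := by
          rw [hθL]
          exact IsHomogeneous.sum _ _ _ fun k _ => isHomogeneous_C_mul_X _ _
        have := aux_dvd_le hθGhom hθLhom hθdvd hθLne
        omega
    have hcmp := aux_dvd_le hEdeg hRhom hER hRne
    rwa [Nat.mul_comm ν μ] at hcmp
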